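/- Let f : ℝⁿ → ℝ be differentiable and let l ∈ ℝ be such that the function u ↦ f(u) + (l/2)‖u‖² is convex. Let γ > 0 and suppose u₁, u₂, x₀, x₁ ∈ ℝⁿ satisfy 0 = ∇f(u₁) + (1/γ)(u₁ − x₀) and 0 = ∇f(u₂) + (1/γ)(u₂ − x₁). Then ⟨u₂ − u₁, x₁ − x₀⟩ ≥ (1 − γl)·‖u₂ − u₁‖². -/

import Mathlib

open scoped InnerProductSpace RealInnerProductSpace
open Filter Topology

section aux

variable {n : ℕ}

/-- Subgradient inequality for a differentiable convex function. -/
lemma subgrad_ineq (g : EuclideanSpace ℝ (Fin n) → ℝ) (hg : Differentiable ℝ g)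
    (hc : ConvexOn ℝ Set.univ g) (x y : EuclideanSpace ℝ (Fin n)) :
    ⟪gradient g x, y - x⟫_ℝ ≤ g y - g x := by
  set φ : ℝ → ℝ := fun t => g (x + t • (y - x)) with hφ
  have hline : ∀ t : ℝ, HasDerivAt (fun t : ℝ => x + t • (y - x)) (y - x) t := by
    intro t
    simpa using ((hasDerivAt_id t).smul_const (y - x)).const_add x
  have hder : ∀ t : ℝ, HasDerivAt φ ⟪gradient g (x + t • (y - x)), y - x⟫_ℝ t := by
    intro t
    have h1 : HasFDerivAt g
        ((InnerProductSpace.toDual ℝ _) (gradient g (x + t • (y - x)))) (x + t • (y - x)) :=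
      hasGradientAt_iff_hasFDerivAt.mp (hg _).hasGradientAt
    have h2 := h1.comp_hasDerivAt t (hline t)
    exact h2
  have hφconv : ConvexOn ℝ Set.univ φ := by
    have h := hc.comp_affineMap (AffineMap.lineMap x y : ℝ →ᵃ[ℝ] EuclideanSpace ℝ (Fin n))
    simp only [Set.preimage_univ] at h
    have heq : φ = g ∘ (AffineMap.lineMap x y : ℝ →ᵃ[ℝ] EuclideanSpace ℝ (Fin n)) := by
      funext t
      have harg : x + t • (y - x) = (AffineMap.lineMap x y : ℝ →ᵃ[ℝ] EuclideanSpace ℝ (Fin n)) t := by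
        simp only [AffineMap.lineMap_apply, vsub_eq_sub, vadd_eq_add]
        module
      simp only [φ, Function.comp_apply, harg]
    rw [heq]
    exact h
  have key : deriv φ 0 ≤ slope φ 0 1 :=
    hφconv.deriv_le_slope (Set.mem_univ 0) (Set.mem_univ 1) zero_lt_one (hder 0).differentiableAt
  rw [(hder 0).deriv] at key
  simp only [slope_def_field] at key
  have h0 : φ 0 = g x := by simp [φ]
  have h1 : φ 1 = g y := by simp [φ]
  simpa [h0, h1] using key

end aux

/-- the monotonicity-type inequality obtained from the first-order
conditions of two proximal subproblems of `f`. -/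
theorem inner_ge_of_prox_optimality {n : ℕ} (l γ : ℝ) (hγ : 0 < γ)
    (f : EuclideanSpace ℝ (Fin n) → ℝ) (hf : Differentiable ℝ f)
    (hconv : ConvexOn ℝ Set.univ (fun w => f w + (l/2) * ‖w‖^2))
    (u₁ u₂ x₀ x₁ : EuclideanSpace ℝ (Fin n))
    (h₁ : gradient f u₁ + (1/γ) • (u₁ - x₀) = 0)
    (h₂ : gradient f u₂ + (1/γ) • (u₂ - x₁) = 0) :
    (1 - γ * l) * ‖u₂ - u₁‖^2 ≤ ⟪u₂ - u₁, x₁ - x₀⟫_ℝ := by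
  set g : EuclideanSpace ℝ (Fin n) → ℝ := fun w => f w + (l/2) * ‖w‖^2 with hg
  -- gradient of g
  have hgradg : ∀ x, HasGradientAt g (gradient f x + l • x) x := by
    intro x
    rw [hasGradientAt_iff_hasFDerivAt]
    have hF : HasFDerivAt f ((InnerProductSpace.toDual ℝ _) (gradient f x)) x :=
      hasGradientAt_iff_hasFDerivAt.mp (hf x).hasGradientAt
    have hsq : HasFDerivAt (fun w : EuclideanSpace ℝ (Fin n) => (l/2) * ‖w‖^2)
        ((l : ℝ) • (InnerProductSpace.toDual ℝ _) x) x := by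
      have hi : HasFDerivAt (fun w : EuclideanSpace ℝ (Fin n) => ⟪w, w⟫_ℝ)
          ((2 : ℝ) • (InnerProductSpace.toDual ℝ _) x) x := by
        have := (hasFDerivAt_id x).inner ℝ (hasFDerivAt_id x)
        refine this.congr_fderiv ?_
        ext v
        simp [real_inner_comm, two_mul]
      have := hi.const_mul (l/2)
      have heq : (fun w : EuclideanSpace ℝ (Fin n) => (l/2) * ⟪w, w⟫_ℝ)
          = fun w => (l/2) * ‖w‖^2 := by
        funext w; rw [real_inner_self_eq_norm_sq]
      rw [heq] at this
      refine this.congr_fderiv ?_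
      ext v
      simp
      ring
    have := hF.add hsq
    refine this.congr_fderiv ?_
    ext v
    simp [inner_add_left, inner_smul_left]
  have hgdiff : Differentiable ℝ g := fun x => (hgradg x).differentiableAt
  have hmono : (0:ℝ) ≤ ⟪(gradient f u₂ + l • u₂) - (gradient f u₁ + l • u₁), u₂ - u₁⟫_ℝ := by
    have e1 : gradient g u₁ = gradient f u₁ + l • u₁ := (hgradg u₁).gradient
    have e2 : gradient g u₂ = gradient f u₂ + l • u₂ := (hgradg u₂).gradient
    have i1 := subgrad_ineq g hgdiff hconv u₁ u₂
    have i2 := subgrad_ineq g hgdiff hconv u₂ u₁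
    rw [e1] at i1; rw [e2] at i2
    have : ⟪gradient f u₂ + l • u₂, u₁ - u₂⟫_ℝ + ⟪gradient f u₁ + l • u₁, u₂ - u₁⟫_ℝ ≤ 0 := by
      linarith
    rw [inner_sub_left]
    have hswap : (u₁ - u₂) = -(u₂ - u₁) := by abel
    rw [hswap, inner_neg_right] at this
    linarith
  -- solve for gradients
  have hγ' : γ ≠ 0 := ne_of_gt hγ
  have hgf1 : gradient f u₁ = -((1/γ) • (u₁ - x₀)) := by
    rw [← eq_neg_iff_add_eq_zero] at h₁; exact h₁
  have hgf2 : gradient f u₂ = -((1/γ) • (u₂ - x₁)) := by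
    rw [← eq_neg_iff_add_eq_zero] at h₂; exact h₂
  rw [hgf1, hgf2] at hmono
  have expand : (-((1/γ) • (u₂ - x₁)) + l • u₂) - (-((1/γ) • (u₁ - x₀)) + l • u₁)
      = (-(1/γ)) • ((u₂ - u₁) - (x₁ - x₀)) + l • (u₂ - u₁) := by
    module
  rw [expand, inner_add_left, inner_smul_left, inner_smul_left, inner_sub_left,
    real_inner_self_eq_norm_sq] at hmono
  simp only [RCLike.ofReal_real_eq_id, id, conj_trivial] at hmono
  have hcomm : ⟪x₁ - x₀, u₂ - u₁⟫_ℝ = ⟪u₂ - u₁, x₁ - x₀⟫_ℝ := real_inner_comm _ _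
  rw [hcomm] at hmono
  have h := mul_le_mul_of_nonneg_left hmono (le_of_lt hγ)
  have e : γ * (-(1/γ) * (‖u₂ - u₁‖ ^ 2 - ⟪u₂ - u₁, x₁ - x₀⟫_ℝ) + l * ‖u₂ - u₁‖ ^ 2)
      = -(‖u₂ - u₁‖ ^ 2 - ⟪u₂ - u₁, x₁ - x₀⟫_ℝ) + γ * l * ‖u₂ - u₁‖ ^ 2 := by
    field_simp
  rw [e, mul_zero] at h
  nlinarith [h]
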